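/- Let ℓ : [0,∞) → [0,∞) be decreasing with ℓ(r) ∈ o(r^{−d}) and τ > 0. Then lim_{n→∞} n^{−d} ∫_{ℝ^d \ Λ_{4n}} [exp(τ (2n)^d ℓ((1+√d)^{−1}|x|)) − 1] dx = 0. -/

import Mathlib

open MeasureTheory Filter Asymptotics

lemma exp_sub_one_le_three_mul {u : ℝ} (h0 : 0 ≤ u) (h1 : u ≤ 1) :
    Real.exp u - 1 ≤ 3 * u := by
  have hmul : Real.exp (-u) * Real.exp u = 1 := by
    rw [← Real.exp_add]; simp
  have h3 : 1 - u ≤ Real.exp (-u) := by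
    have := Real.add_one_le_exp (-u); linarith
  have h2 : (1 - u) * Real.exp u ≤ 1 := by
    calc (1 - u) * Real.exp u ≤ Real.exp (-u) * Real.exp u :=
          mul_le_mul_of_nonneg_right h3 (Real.exp_pos u).le
      _ = 1 := hmul
  have h4 : Real.exp u ≤ Real.exp 1 := Real.exp_le_exp.2 h1
  have h5 : Real.exp 1 < 2.7182818286 := Real.exp_one_lt_d9
  nlinarith [Real.exp_pos u, mul_le_mul_of_nonneg_left h4 h0]

lemma abs_coord_le_norm' {d : ℕ} (x : EuclideanSpace ℝ (Fin d)) (i : Fin d) : |x i| ≤ ‖x‖ := by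
  rw [EuclideanSpace.norm_eq, ← Real.sqrt_sq_eq_abs]
  apply Real.sqrt_le_sqrt
  have := Finset.single_le_sum (f := fun j => ‖x j‖ ^ 2) (fun j _ => sq_nonneg _)
    (Finset.mem_univ i)
  simpa [Real.norm_eq_abs, sq_abs] using this

theorem stmt_4 (d : ℕ) (hd : 0 < d) (τ : ℝ) (hτ : 0 < τ)
    (ℓ : ℝ → ℝ) (hmono : AntitoneOn ℓ (Set.Ici 0)) (hpos : ∀ r, 0 ≤ r → 0 ≤ ℓ r)
    (ho : ℓ =o[atTop] fun r : ℝ => r ^ (-(d : ℝ)))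
    (hint : Integrable (fun x : EuclideanSpace ℝ (Fin d) => ℓ ‖x‖)) :
    Tendsto (fun n : ℕ => ((n : ℝ) ^ d)⁻¹ *
        ∫ x in {x : EuclideanSpace ℝ (Fin d) | ¬ ∀ i, |x i| ≤ 2 * (n : ℝ)},
          (Real.exp (τ * (2 * (n : ℝ)) ^ d * ℓ ((1 + Real.sqrt d)⁻¹ * ‖x‖)) - 1))
      atTop (nhds 0) := by
  set c : ℝ := (1 + Real.sqrt d)⁻¹ with hcdef
  have hsd : 0 ≤ Real.sqrt d := Real.sqrt_nonneg _
  have hc0 : 0 < c := by rw [hcdef]; positivity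
  set L : ℝ → ℝ := fun r => ℓ (max r 0) with hLdef
  have hLanti : Antitone L := fun a b hab =>
    hmono (Set.mem_Ici.mpr (le_max_right a 0)) (Set.mem_Ici.mpr (le_max_right b 0))
      (max_le_max hab le_rfl)
  have hLeq : ∀ r, 0 ≤ r → L r = ℓ r := fun r hr => by
    simp only [hLdef, max_eq_left hr]
  have hLnn : ∀ r, 0 ≤ L r := fun r => hpos _ (le_max_right _ _)
  -- integrability of the rescaled profile
  have hg0 : Integrable (fun x : EuclideanSpace ℝ (Fin d) => L (c * ‖x‖)) := by
    have heq : (fun x : EuclideanSpace ℝ (Fin d) => L (c * ‖x‖))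
        = fun x => (fun y : EuclideanSpace ℝ (Fin d) => ℓ ‖y‖) (c • x) := by
      funext x
      simp only [norm_smul, Real.norm_eq_abs, abs_of_pos hc0]
      exact hLeq _ (by positivity)
    rw [heq]
    exact (integrable_comp_smul_iff volume _ hc0.ne').2 hint
  -- measurability of the bad sets
  have hSmeas : ∀ n : ℕ,
      MeasurableSet {x : EuclideanSpace ℝ (Fin d) | ¬ ∀ i, |x i| ≤ 2 * (n : ℝ)} := by
    intro n
    have : {x : EuclideanSpace ℝ (Fin d) | ¬ ∀ i, |x i| ≤ 2 * (n : ℝ)}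
        = (⋂ i, {x : EuclideanSpace ℝ (Fin d) | |x i| ≤ 2 * (n : ℝ)})ᶜ := by
      ext x; simp
    rw [this]
    refine (MeasurableSet.iInter fun i => ?_).compl
    exact measurableSet_le ((EuclideanSpace.proj (𝕜 := ℝ) (i := i)).continuous.measurable.abs) measurable_const
  -- tail integral tends to zero
  have hmonoset : Monotone (fun n : ℕ => Metric.ball (0 : EuclideanSpace ℝ (Fin d)) (2 * n)) := by
    intro a b hab
    apply Metric.ball_subset_ball
    have : (a : ℝ) ≤ b := Nat.cast_le.mpr hab
    linarith
  have hunion : (⋃ n : ℕ, Metric.ball (0 : EuclideanSpace ℝ (Fin d)) (2 * n)) = Set.univ := by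
    ext x
    simp only [Set.mem_iUnion, Metric.mem_ball, dist_zero_right, Set.mem_univ, iff_true]
    obtain ⟨n, hn⟩ := exists_nat_gt ‖x‖
    exact ⟨n, by linarith [Nat.cast_nonneg (α := ℝ) n]⟩
  have h1 : Tendsto (fun n : ℕ => ∫ x in Metric.ball (0 : EuclideanSpace ℝ (Fin d)) (2 * n),
      L (c * ‖x‖)) atTop (nhds (∫ x : EuclideanSpace ℝ (Fin d), L (c * ‖x‖))) := by
    have := tendsto_setIntegral_of_monotone (μ := volume)
      (f := fun x : EuclideanSpace ℝ (Fin d) => L (c * ‖x‖))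
      (fun n : ℕ => measurableSet_ball) hmonoset (by rw [hunion]; exact hg0.integrableOn)
    rwa [hunion, setIntegral_univ] at this
  set K : ℕ → ℝ := fun n =>
    ∫ x in (Metric.ball (0 : EuclideanSpace ℝ (Fin d)) (2 * n))ᶜ, L (c * ‖x‖) with hKdef
  have htail : Tendsto K atTop (nhds 0) := by
    have hKeq : ∀ n, K n = (∫ x : EuclideanSpace ℝ (Fin d), L (c * ‖x‖))
        - ∫ x in Metric.ball (0 : EuclideanSpace ℝ (Fin d)) (2 * n), L (c * ‖x‖) := by
      intro n
      have := integral_add_compl (measurableSet_ball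
        (x := (0 : EuclideanSpace ℝ (Fin d))) (ε := 2 * n)) hg0
      simp only [hKdef]
      linarith
    have : Tendsto (fun n : ℕ => (∫ x : EuclideanSpace ℝ (Fin d), L (c * ‖x‖))
        - ∫ x in Metric.ball (0 : EuclideanSpace ℝ (Fin d)) (2 * n), L (c * ‖x‖))
        atTop (nhds ((∫ x : EuclideanSpace ℝ (Fin d), L (c * ‖x‖)) - ∫ x : EuclideanSpace ℝ (Fin d), L (c * ‖x‖))) := tendsto_const_nhds.sub h1
    simp only [sub_self] at this
    exact Tendsto.congr (fun n => (hKeq n).symm) this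
  -- upper bound sequence tends to zero
  have hB : Tendsto (fun n : ℕ => 3 * τ * 2 ^ d * K n) atTop (nhds 0) := by
    simpa using htail.const_mul (3 * τ * 2 ^ d)
  -- squeeze
  apply tendsto_of_tendsto_of_tendsto_of_le_of_le' tendsto_const_nhds hB
  · -- nonnegativity
    filter_upwards with n
    apply mul_nonneg (by positivity)
    apply setIntegral_nonneg (hSmeas n)
    intro x _
    have h0 : 0 ≤ τ * (2 * (n : ℝ)) ^ d * ℓ (c * ‖x‖) := by
      have := hpos (c * ‖x‖) (by positivity)
      positivity
    have := Real.one_le_exp h0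
    linarith
  · -- main estimate, eventually
    have hcn : Tendsto (fun n : ℕ => c * (2 * (n : ℝ))) atTop atTop := by
      have h := tendsto_natCast_atTop_atTop (R := ℝ)
      have := h.const_mul_atTop (show (0 : ℝ) < c * 2 by positivity)
      simpa [mul_assoc] using this
    have hε : (0 : ℝ) < c ^ d / (2 * τ) := by positivity
    have hoE := ho.def hε
    filter_upwards [hcn.eventually hoE, eventually_ge_atTop 1] with n hno hn1
    have hn1' : (1 : ℝ) ≤ (n : ℝ) := Nat.one_le_cast.mpr hn1
    set r : ℝ := c * (2 * (n : ℝ)) with hrdef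
    have hr0 : 0 < r := by rw [hrdef]; positivity
    have hP : (0 : ℝ) < (2 * (n : ℝ)) ^ d := by positivity
    -- the key smallness estimate
    have hkey : τ * (2 * (n : ℝ)) ^ d * L r ≤ 1 := by
      have hno' : ℓ r ≤ c ^ d / (2 * τ) * (r ^ d)⁻¹ := by
        have h1 : ‖ℓ r‖ ≤ c ^ d / (2 * τ) * ‖r ^ (-(d : ℝ))‖ := hno
        have h2 : r ^ (-(d : ℝ)) = (r ^ d)⁻¹ := by
          rw [Real.rpow_neg hr0.le, Real.rpow_natCast]
        rw [h2, Real.norm_eq_abs, Real.norm_eq_abs, abs_of_nonneg (hpos r hr0.le),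
          abs_of_nonneg (by positivity)] at h1
        exact h1
      have h3 : τ * (2 * (n : ℝ)) ^ d * ℓ r
          ≤ τ * (2 * (n : ℝ)) ^ d * (c ^ d / (2 * τ) * (r ^ d)⁻¹) :=
        mul_le_mul_of_nonneg_left hno' (by positivity)
      have h4 : r ^ d = c ^ d * (2 * (n : ℝ)) ^ d := by rw [hrdef, mul_pow]
      have h5 : τ * (2 * (n : ℝ)) ^ d * (c ^ d / (2 * τ) * (r ^ d)⁻¹) = 1 / 2 := by
        rw [h4]
        field_simp
      rw [hLeq r hr0.le]
      linarith
    -- pointwise bound on the bad set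
    have hpt : ∀ x ∈ {x : EuclideanSpace ℝ (Fin d) | ¬ ∀ i, |x i| ≤ 2 * (n : ℝ)},
        Real.exp (τ * (2 * (n : ℝ)) ^ d * ℓ (c * ‖x‖)) - 1
          ≤ 3 * τ * (2 * (n : ℝ)) ^ d * L (c * ‖x‖) := by
      intro x hx
      simp only [Set.mem_setOf_eq, not_forall, not_le] at hx
      obtain ⟨i, hi⟩ := hx
      have hxn : 2 * (n : ℝ) ≤ ‖x‖ := le_trans hi.le (abs_coord_le_norm' x i)
      have hrx : r ≤ c * ‖x‖ := by
        rw [hrdef]; exact mul_le_mul_of_nonneg_left hxn hc0.le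
      have hLle : L (c * ‖x‖) ≤ L r := hLanti hrx
      have hu0 : 0 ≤ τ * (2 * (n : ℝ)) ^ d * L (c * ‖x‖) := by
        have := hLnn (c * ‖x‖); positivity
      have hu1 : τ * (2 * (n : ℝ)) ^ d * L (c * ‖x‖) ≤ 1 := by
        refine le_trans ?_ hkey
        exact mul_le_mul_of_nonneg_left hLle (by positivity)
      have hLx : L (c * ‖x‖) = ℓ (c * ‖x‖) := hLeq _ (by positivity)
      rw [← hLx]
      have := exp_sub_one_le_three_mul hu0 hu1
      linarith [this]
    -- integral comparison
    have hSsub : {x : EuclideanSpace ℝ (Fin d) | ¬ ∀ i, |x i| ≤ 2 * (n : ℝ)}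
        ⊆ (Metric.ball (0 : EuclideanSpace ℝ (Fin d)) (2 * n))ᶜ := by
      intro x hx
      simp only [Set.mem_setOf_eq, not_forall, not_le] at hx
      obtain ⟨i, hi⟩ := hx
      have hxn : 2 * (n : ℝ) ≤ ‖x‖ := le_trans hi.le (abs_coord_le_norm' x i)
      simp only [Set.mem_compl_iff, Metric.mem_ball, dist_zero_right, not_lt]
      exact hxn
    have hstep1 : (∫ x in {x : EuclideanSpace ℝ (Fin d) | ¬ ∀ i, |x i| ≤ 2 * (n : ℝ)},
          (Real.exp (τ * (2 * (n : ℝ)) ^ d * ℓ (c * ‖x‖)) - 1))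
        ≤ ∫ x in {x : EuclideanSpace ℝ (Fin d) | ¬ ∀ i, |x i| ≤ 2 * (n : ℝ)},
          3 * τ * (2 * (n : ℝ)) ^ d * L (c * ‖x‖) := by
      apply integral_mono_of_nonneg
      · filter_upwards with x
        have h0 : 0 ≤ τ * (2 * (n : ℝ)) ^ d * ℓ (c * ‖x‖) := by
          have := hpos (c * ‖x‖) (by positivity); positivity
        simp only [Pi.zero_apply, sub_nonneg]
        exact Real.one_le_exp h0
      · exact ((hg0.const_mul (3 * τ * (2 * (n : ℝ)) ^ d)).restrict)
      · rw [EventuallyLE, ae_restrict_iff' (hSmeas n)]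
        filter_upwards with x hx
        exact hpt x hx
    have hstep2 : (∫ x in {x : EuclideanSpace ℝ (Fin d) | ¬ ∀ i, |x i| ≤ 2 * (n : ℝ)},
          3 * τ * (2 * (n : ℝ)) ^ d * L (c * ‖x‖))
        = 3 * τ * (2 * (n : ℝ)) ^ d *
          ∫ x in {x : EuclideanSpace ℝ (Fin d) | ¬ ∀ i, |x i| ≤ 2 * (n : ℝ)}, L (c * ‖x‖) :=
      integral_const_mul _ _
    have hstep3 : (∫ x in {x : EuclideanSpace ℝ (Fin d) | ¬ ∀ i, |x i| ≤ 2 * (n : ℝ)},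
          L (c * ‖x‖)) ≤ K n := by
      apply setIntegral_mono_set hg0.integrableOn
      · filter_upwards with x using hLnn _
      · exact HasSubset.Subset.eventuallyLE hSsub
    have hKnn : 0 ≤ K n := by
      apply setIntegral_nonneg measurableSet_ball.compl
      intro x _; exact hLnn _
    -- put it together
    have hfinal : ((n : ℝ) ^ d)⁻¹ *
        (∫ x in {x : EuclideanSpace ℝ (Fin d) | ¬ ∀ i, |x i| ≤ 2 * (n : ℝ)},
          (Real.exp (τ * (2 * (n : ℝ)) ^ d * ℓ (c * ‖x‖)) - 1))
        ≤ ((n : ℝ) ^ d)⁻¹ * (3 * τ * (2 * (n : ℝ)) ^ d * K n) := by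
      apply mul_le_mul_of_nonneg_left _ (by positivity)
      calc (∫ x in {x : EuclideanSpace ℝ (Fin d) | ¬ ∀ i, |x i| ≤ 2 * (n : ℝ)},
            (Real.exp (τ * (2 * (n : ℝ)) ^ d * ℓ (c * ‖x‖)) - 1))
          ≤ _ := hstep1
        _ = _ := hstep2
        _ ≤ 3 * τ * (2 * (n : ℝ)) ^ d * K n :=
            mul_le_mul_of_nonneg_left hstep3 (by positivity)
    have hcalc : ((n : ℝ) ^ d)⁻¹ * (3 * τ * (2 * (n : ℝ)) ^ d * K n)
        = 3 * τ * 2 ^ d * K n := by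
      have hnne : ((n : ℝ)) ^ d ≠ 0 := by positivity
      rw [mul_pow]
      field_simp
    calc ((n : ℝ) ^ d)⁻¹ *
        (∫ x in {x : EuclideanSpace ℝ (Fin d) | ¬ ∀ i, |x i| ≤ 2 * (n : ℝ)},
          (Real.exp (τ * (2 * (n : ℝ)) ^ d * ℓ (c * ‖x‖)) - 1))
        ≤ ((n : ℝ) ^ d)⁻¹ * (3 * τ * (2 * (n : ℝ)) ^ d * K n) := hfinal
      _ = 3 * τ * 2 ^ d * K n := hcalc
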